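/- Let M ∈ ℚ[[X, U]] be the two-variable formal power series whose coefficient of X^n U^k is the number of bicolored Motzkin paths of length n with exactly k steps in {U, O1}, and let W ∈ ℚ[[X, U]] be the series whose coefficient of X^n U^k is the number of bilateral Motzkin paths of length n with exactly k steps in {U, O1}. Then W satisfies the functional equation W = 1 + (X + X·U)·W + 2·U·X²·M·W. -/

import Mathlib

/-- The four kinds of steps: up, down, and two colors of horizontal steps. -/
inductive Step where
  | U : Step
  | D : Step
  | O1 : Step
  | O2 : Step
deriving DecidableEq

instance : Fintype Step :=
  ⟨{Step.U, Step.D, Step.O1, Step.O2}, by intro x; cases x <;> simp⟩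

/-- Weight of a step: U has weight 1, D has weight −1, O1 and O2 weight 0. -/
def Step.wt : Step → ℤ
  | .U => 1
  | .D => -1
  | .O1 => 0
  | .O2 => 0

/-- Height of a step word after its first `i` steps. -/
def stepHeight {n : ℕ} (r : Fin n → Step) (i : ℕ) : ℤ :=
  ∑ j ∈ Finset.univ.filter (fun j : Fin n => (j : ℕ) < i), (r j).wt

/-- Partial sum of a `±1`-sequence after its first `i` entries. -/
def partialSum {n : ℕ} (p : Fin n → ℤ) (i : ℕ) : ℤ :=
  ∑ j ∈ Finset.univ.filter (fun j : Fin n => (j : ℕ) < i), p j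

/-- Number of bicolored Motzkin paths of length `n` with exactly `k` steps in
`{U, O1}`: step words staying weakly above the axis and ending at height 0. -/
noncomputable def bicoloredMotzkinCount (n k : ℕ) : ℕ :=
  Nat.card {r : Fin n → Step //
    (∀ i ∈ Finset.range n, 0 ≤ stepHeight r (i + 1)) ∧
    stepHeight r n = 0 ∧
    (Finset.univ.filter fun i => r i = Step.U ∨ r i = Step.O1).card = k}

/-- Number of bilateral Motzkin paths of length `n` with exactly `k` steps in
`{U, O1}`: step words ending at height 0. -/
noncomputable def bilateralMotzkinCount (n k : ℕ) : ℕ :=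
  Nat.card {r : Fin n → Step //
    stepHeight r n = 0 ∧
    (Finset.univ.filter fun i => r i = Step.U ∨ r i = Step.O1).card = k}

/-- The generating function `M ∈ ℚ[[X,U]]` of bicolored Motzkin paths
(variable 0 is `X`, marking the length; variable 1 is `U`, marking the number
of steps in `{U, O1}`). -/
noncomputable def Mser : MvPowerSeries (Fin 2) ℚ :=
  fun d => (bicoloredMotzkinCount (d 0) (d 1) : ℚ)

/-- The generating function `W ∈ ℚ[[X,U]]` of bilateral Motzkin paths
(variable 0 is `X`, marking the length; variable 1 is `U`, marking the number
of steps in `{U, O1}`). -/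
noncomputable def Wser : MvPowerSeries (Fin 2) ℚ :=
  fun d => (bilateralMotzkinCount (d 0) (d 1) : ℚ)

/-- mark weight -/
def Step.mk1 : Step → ℕ
  | .U => 1
  | .D => 0
  | .O1 => 1
  | .O2 => 0

def Ssum (l : List Step) : ℤ := (l.map Step.wt).sum
def marks (l : List Step) : ℕ := (l.map Step.mk1).sum
def nonneg (l : List Step) : Prop := ∀ t, 0 ≤ Ssum (l.take t)

@[simp] lemma Ssum_nil : Ssum [] = 0 := rfl
@[simp] lemma Ssum_cons (s : Step) (l : List Step) : Ssum (s :: l) = s.wt + Ssum l := by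
  simp [Ssum]
@[simp] lemma Ssum_append (a b : List Step) : Ssum (a ++ b) = Ssum a + Ssum b := by
  simp [Ssum]
@[simp] lemma marks_nil : marks [] = 0 := rfl
@[simp] lemma marks_cons (s : Step) (l : List Step) : marks (s :: l) = s.mk1 + marks l := by
  simp [marks]
@[simp] lemma marks_append (a b : List Step) : marks (a ++ b) = marks a + marks b := by
  simp [marks]

lemma Ssum_le_marks (l : List Step) : Ssum l ≤ (marks l : ℤ) := by
  induction l with
  | nil => simp
  | cons s t ih => cases s <;> simp [Step.wt, Step.mk1] <;> omega

lemma stepHeight_zero {n : ℕ} (r : Fin n → Step) : stepHeight r 0 = 0 := by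
  simp [stepHeight]

lemma stepHeight_succ {n : ℕ} (r : Fin n → Step) (i : ℕ) (h : i < n) :
    stepHeight r (i + 1) = stepHeight r i + (r ⟨i, h⟩).wt := by
  unfold stepHeight
  have : Finset.univ.filter (fun j : Fin n => (j : ℕ) < i + 1)
      = insert ⟨i, h⟩ (Finset.univ.filter (fun j : Fin n => (j : ℕ) < i)) := by
    ext j
    simp only [Finset.mem_filter, Finset.mem_univ, true_and, Finset.mem_insert, Fin.ext_iff]
    omega
  rw [this, Finset.sum_insert (by simp)]
  ring

lemma stepHeight_succ_of_le {n : ℕ} (r : Fin n → Step) (i : ℕ) (h : n ≤ i) :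
    stepHeight r (i + 1) = stepHeight r i := by
  unfold stepHeight
  congr 1
  ext j
  simp only [Finset.mem_filter, Finset.mem_univ, true_and]
  have := j.isLt; omega

lemma stepHeight_eq_Ssum_take {n : ℕ} (r : Fin n → Step) (i : ℕ) :
    stepHeight r i = Ssum ((List.ofFn r).take i) := by
  induction i with
  | zero => simp [stepHeight_zero]
  | succ i ih =>
    rcases lt_or_ge i n with h | h
    · rw [stepHeight_succ r i h, ih, List.take_succ]
      have hi : (List.ofFn r)[i]? = some (r ⟨i, h⟩) := by
        rw [List.getElem?_eq_getElem (by simpa using h)]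
        simp
      simp [hi]
    · rw [stepHeight_succ_of_le r i h, ih, List.take_of_length_le (by simpa using h),
        List.take_of_length_le (by simp; omega)]

lemma filter_card_eq_marks {n : ℕ} (r : Fin n → Step) :
    (Finset.univ.filter fun i => r i = Step.U ∨ r i = Step.O1).card = marks (List.ofFn r) := by
  rw [marks, List.map_ofFn, List.sum_ofFn, Finset.card_filter]
  refine Finset.sum_congr rfl fun i _ => ?_
  cases h : r i <;> simp [h, Step.mk1, Function.comp]

noncomputable def BL (n k : ℕ) : ℕ :=
  Nat.card {l : List Step // l.length = n ∧ Ssum l = 0 ∧ marks l = k}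

noncomputable def CL (n k : ℕ) : ℕ :=
  Nat.card {l : List Step // l.length = n ∧ nonneg l ∧ Ssum l = 0 ∧ marks l = k}

/-- functions to lists with a predicate -/
def funListEquiv (n : ℕ) (P : List Step → Prop) :
    {r : Fin n → Step // P (List.ofFn r)} ≃ {l : List Step // l.length = n ∧ P l} where
  toFun r := ⟨List.ofFn r.1, by simp, r.2⟩
  invFun l := ⟨fun i => l.1.get (Fin.cast l.2.1.symm i), by
    have : (List.ofFn fun i => l.1.get (Fin.cast l.2.1.symm i)) = l.1 := by
      apply List.ext_get (by simp [l.2.1])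
      intro i h1 h2
      simp
    rw [this]; exact l.2.2⟩
  left_inv r := by
    ext i
    simp [List.get_ofFn]
  right_inv l := by
    apply Subtype.ext
    apply List.ext_get (by simp [l.2.1])
    intro i h1 h2
    simp

lemma Ssum_ofFn {n : ℕ} (r : Fin n → Step) : Ssum (List.ofFn r) = stepHeight r n := by
  rw [stepHeight_eq_Ssum_take, List.take_of_length_le (by simp)]

lemma nonneg_ofFn_iff {n : ℕ} (r : Fin n → Step) :
    nonneg (List.ofFn r) ↔ ∀ i ∈ Finset.range n, 0 ≤ stepHeight r (i + 1) := by
  constructor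
  · intro h i _
    rw [stepHeight_eq_Ssum_take]; exact h (i + 1)
  · intro h t
    rw [← stepHeight_eq_Ssum_take]
    induction t with
    | zero => simp [stepHeight_zero]
    | succ t ih =>
      rcases lt_or_ge t n with ht | ht
      · exact h t (Finset.mem_range.2 ht)
      · rwa [stepHeight_succ_of_le r t ht]

lemma bilateral_eq_BL (n k : ℕ) : bilateralMotzkinCount n k = BL n k := by
  refine Nat.card_congr (Equiv.trans ?_ (funListEquiv n (fun l => Ssum l = 0 ∧ marks l = k)))
  refine Equiv.subtypeEquivRight fun r => ?_
  rw [Ssum_ofFn, filter_card_eq_marks]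

lemma bicolored_eq_CL (n k : ℕ) : bicoloredMotzkinCount n k = CL n k := by
  refine Nat.card_congr (Equiv.trans ?_
    (funListEquiv n (fun l => nonneg l ∧ Ssum l = 0 ∧ marks l = k)))
  refine Equiv.subtypeEquivRight fun r => ?_
  rw [Ssum_ofFn, filter_card_eq_marks, nonneg_ofFn_iff]

instance listLenFinite (n : ℕ) : Finite {l : List Step // l.length = n} := by
  have e := (funListEquiv n (fun _ => True)).trans
    (Equiv.subtypeEquivRight (fun l => by simp : ∀ l : List Step, l.length = n ∧ True ↔ l.length = n))
  exact Finite.of_equiv _ (e.trans (Equiv.subtypeEquivRight (fun _ => Iff.rfl)))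

lemma finite_of_length {P : List Step → Prop} {n : ℕ} (h : ∀ l, P l → l.length = n) :
    Finite {l : List Step // P l} :=
  Finite.of_injective (fun x => (⟨x.1, h _ x.2⟩ : {l : List Step // l.length = n}))
    (fun a b hab => Subtype.ext (by simpa using congrArg Subtype.val hab))

instance listFinite (n : ℕ) (P : List Step → Prop) : Finite {l : List Step // l.length = n ∧ P l} :=
  finite_of_length (fun _ h => h.1)

def consEquiv (Q : List Step → Prop) (n : ℕ) :
    {p : Step × List Step // p.2.length = n ∧ Q (p.1 :: p.2)} ≃
      {l : List Step // l.length = n + 1 ∧ Q l} where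
  toFun p := ⟨p.1.1 :: p.1.2, by simp [p.2.1], p.2.2⟩
  invFun l :=
    match l with
    | ⟨[], h⟩ => absurd h.1 (by simp)
    | ⟨a :: t, h⟩ => ⟨(a, t), by simpa using h.1, h.2⟩
  left_inv p := rfl
  right_inv l := by
    obtain ⟨l, h⟩ := l
    cases l with
    | nil => exact absurd h.1 (by simp)
    | cons a t => rfl

def prodSigmaEquiv {β : Type*} (R : Step → β → Prop) :
    {p : Step × β // R p.1 p.2} ≃ Σ s : Step, {t : β // R s t} where
  toFun p := ⟨p.1.1, p.1.2, p.2⟩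
  invFun x := ⟨(x.1, x.2.1), x.2.2⟩
  left_inv p := rfl
  right_inv x := rfl

lemma card_sigma' {ι : Type*} [Fintype ι] (f : ι → Type*) [∀ i, Finite (f i)] :
    Nat.card (Σ i, f i) = ∑ i, Nat.card (f i) := by
  have : ∀ i, Fintype (f i) := fun i => Fintype.ofFinite (f i)
  simp [Nat.card_eq_fintype_card, Fintype.card_sigma]

lemma step_sum {M : Type*} [AddCommMonoid M] (f : Step → M) :
    ∑ s : Step, f s = f .U + f .D + f .O1 + f .O2 := by
  show Finset.sum Finset.univ f = _
  rw [show (Finset.univ : Finset Step) = {.U, .D, .O1, .O2} from rfl]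
  rw [Finset.sum_insert (by decide), Finset.sum_insert (by decide),
    Finset.sum_insert (by decide), Finset.sum_singleton]
  abel

def Step.neg : Step → Step
  | .U => .D
  | .D => .U
  | .O1 => .O1
  | .O2 => .O2

def negL (l : List Step) : List Step := l.map Step.neg

@[simp] lemma negL_negL (l : List Step) : negL (negL l) = l := by
  simp [negL, List.map_map]
  convert List.map_id l
  ext s; cases s <;> rfl

@[simp] lemma length_negL (l : List Step) : (negL l).length = l.length := by simp [negL]

@[simp] lemma Ssum_negL (l : List Step) : Ssum (negL l) = -Ssum l := by
  induction l with
  | nil => simp [negL]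
  | cons s t ih =>
    have : negL (s :: t) = s.neg :: negL t := rfl
    rw [this, Ssum_cons, Ssum_cons, ih]
    cases s <;> simp [Step.neg, Step.wt] <;> ring

lemma marksZ_negL (l : List Step) : (marks (negL l) : ℤ) = marks l - Ssum l := by
  induction l with
  | nil => simp [negL]
  | cons s t ih =>
    have : negL (s :: t) = s.neg :: negL t := rfl
    rw [this, marks_cons, Ssum_cons, marks_cons]
    push_cast
    rw [ih]
    cases s <;> simp [Step.neg, Step.wt, Step.mk1] <;> ring

lemma firstReturn_exists (t : List Step) (ht : Ssum t = -1) :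
    ∃ m w, t = m ++ Step.D :: w ∧ nonneg m ∧ Ssum m = 0 := by
  have hne : t ≠ [] := by rintro rfl; simp at ht
  have hwit : ∃ j, Ssum (t.take j) < 0 := ⟨t.length, by rw [List.take_of_length_le le_rfl]; omega⟩
  classical
  let j0 := Nat.find hwit
  have hspec : Ssum (t.take j0) < 0 := Nat.find_spec hwit
  have hmin : ∀ j < j0, 0 ≤ Ssum (t.take j) := fun j hj => le_of_not_gt (Nat.find_min hwit hj)
  have hj0pos : 0 < j0 := by
    rcases Nat.eq_zero_or_pos j0 with h | h
    · rw [h] at hspec; simp at hspec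
    · exact h
  have hj0le : j0 ≤ t.length := by
    by_contra h
    push_neg at h
    have := hmin t.length h
    rw [List.take_of_length_le le_rfl] at this
    omega
  have hlt : j0 - 1 < t.length := by omega
  have htake : t.take j0 = t.take (j0 - 1) ++ [t[j0 - 1]] := by
    conv_lhs => rw [show j0 = (j0 - 1) + 1 by omega]
    rw [List.take_succ, List.getElem?_eq_getElem hlt]
    rfl
  have hsum : Ssum (t.take j0) = Ssum (t.take (j0 - 1)) + (t[j0 - 1]'hlt).wt := by
    rw [htake, Ssum_append]; simp
  have hm0 : 0 ≤ Ssum (t.take (j0 - 1)) := hmin _ (by omega)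
  have hwtd : (t[j0 - 1]'hlt).wt = -1 ∧ Ssum (t.take (j0 - 1)) = 0 := by
    have : (t[j0 - 1]'hlt).wt = 1 ∨ (t[j0 - 1]'hlt).wt = -1 ∨ (t[j0 - 1]'hlt).wt = 0 := by
      cases t[j0 - 1]'hlt <;> simp [Step.wt]
    omega
  have hD : t[j0 - 1]'hlt = Step.D := by
    have := hwtd.1
    cases h : t[j0 - 1]'hlt <;> rw [h] at this <;> simp [Step.wt] at this ⊢
  refine ⟨t.take (j0 - 1), t.drop j0, ?_, ?_, hwtd.2⟩
  · conv_lhs => rw [← List.take_append_drop (j0 - 1) t]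
    congr 1
    rw [List.drop_eq_getElem_cons hlt, hD, show j0 - 1 + 1 = j0 by omega]
  · intro j
    rw [List.take_take]
    rcases le_or_gt j (j0 - 1) with h | h
    · rw [min_eq_left h]
      exact hmin j (by omega)
    · rw [min_eq_right (by omega)]
      exact le_of_eq hwtd.2.symm

lemma firstReturn_unique {m w m' w' : List Step}
    (h : m ++ Step.D :: w = m' ++ Step.D :: w')
    (hm : nonneg m) (hm0 : Ssum m = 0) (hm' : nonneg m') (hm0' : Ssum m' = 0) :
    m = m' ∧ w = w' := by
  have hlen : m.length = m'.length := by
    by_contra hne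
    -- wlog via symmetric argument
    rcases Nat.lt_or_ge m.length m'.length with hlt | hge
    · have h1 : (m ++ Step.D :: w).take (m.length + 1) = m ++ [Step.D] := by
        rw [show m.length + 1 = m.length + 1 from rfl]
        rw [List.take_append]
        simp
      have h2 : (m' ++ Step.D :: w').take (m.length + 1) = m'.take (m.length + 1) := by
        rw [List.take_append_of_le_length (by omega)]
      have := hm' (m.length + 1)
      rw [← h2, ← h, h1, Ssum_append] at this
      simp [hm0, Step.wt] at this
    · have hlt : m'.length < m.length := by omega
      have h1 : (m' ++ Step.D :: w').take (m'.length + 1) = m' ++ [Step.D] := by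
        rw [List.take_append]; simp
      have h2 : (m ++ Step.D :: w).take (m'.length + 1) = m.take (m'.length + 1) := by
        rw [List.take_append_of_le_length (by omega)]
      have := hm (m'.length + 1)
      rw [← h2, h, h1, Ssum_append] at this
      simp [hm0', Step.wt] at this
  have := List.append_inj h hlen
  exact ⟨this.1, by simpa using this.2⟩

noncomputable def Cpair (n k : ℕ) : ℕ :=
  Nat.card {q : List Step × List Step // nonneg q.1 ∧ Ssum q.1 = 0 ∧ Ssum q.2 = 0 ∧
    q.1.length + q.2.length + 1 = n ∧ marks q.1 + marks q.2 = k}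

lemma Ufiber (n k : ℕ) :
    Nat.card {t : List Step // t.length = n ∧ Ssum t = -1 ∧ marks t = k} = Cpair n k := by
  refine (Nat.card_congr (Equiv.ofBijective
    (fun q => ⟨q.1.1 ++ Step.D :: q.1.2, by
      have h1 := q.2.2.1; have h2 := q.2.2.2.1; have h3 := q.2.2.2.2.1
      have h4 := q.2.2.2.2.2
      refine ⟨by simp; omega, by simp [Step.wt]; omega, by simp [Step.mk1]; omega⟩⟩)
    ⟨?_, ?_⟩)).symm
  · rintro ⟨⟨m, w⟩, hq⟩ ⟨⟨m', w'⟩, hq'⟩ heq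
    simp only [Subtype.mk.injEq] at heq
    obtain ⟨h1, h2⟩ := firstReturn_unique heq hq.1 hq.2.1 hq'.1 hq'.2.1
    simp [h1, h2]
  · rintro ⟨t, hlen, hsum, hmarks⟩
    obtain ⟨m, w, rfl, hm, hm0⟩ := firstReturn_exists t hsum
    have hw0 : Ssum w = 0 := by simp [Step.wt] at hsum; omega
    refine ⟨⟨(m, w), hm, hm0, hw0, by simp at hlen ⊢; omega, ?_⟩, rfl⟩
    simp [Step.mk1] at hmarks ⊢; omega

lemma Dfiber (n k : ℕ) :
    Nat.card {t : List Step // t.length = n ∧ Ssum t = 1 ∧ marks t = k + 1} =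
      Nat.card {t : List Step // t.length = n ∧ Ssum t = -1 ∧ marks t = k} := by
  refine Nat.card_congr ⟨fun t => ⟨negL t.1, by
      have h1 := t.2.1; have h2 := t.2.2.1; have h3 := t.2.2.2
      have hz := marksZ_negL t.1
      rw [h2, h3] at hz
      push_cast at hz
      exact ⟨by simp [h1], by simp [h2], by omega⟩⟩,
    fun t => ⟨negL t.1, by
      have h1 := t.2.1; have h2 := t.2.2.1; have h3 := t.2.2.2
      have hz := marksZ_negL t.1
      rw [h2, h3] at hz
      push_cast at hz
      exact ⟨by simp [h1], by simp [h2], by omega⟩⟩, ?_, ?_⟩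
  · intro t; apply Subtype.ext; simp
  · intro t; apply Subtype.ext; simp

lemma Dfiber_zero (n : ℕ) :
    Nat.card {t : List Step // t.length = n ∧ Ssum t = 1 ∧ marks t = 0} = 0 := by
  refine Nat.card_eq_zero.2 (Or.inl ⟨fun t => ?_⟩)
  obtain ⟨t, h1, h2, h3⟩ := t
  have := Ssum_le_marks t
  rw [h2, h3] at this
  simp at this

lemma headO2 (n k : ℕ) :
    Nat.card {t : List Step // t.length = n ∧ Ssum (Step.O2 :: t) = 0 ∧ marks (Step.O2 :: t) = k}
      = BL n k := by
  rw [BL]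
  exact Nat.card_congr (Equiv.subtypeEquivRight fun t => by simp [Step.wt, Step.mk1])

lemma headO1_succ (n k : ℕ) :
    Nat.card {t : List Step //
      t.length = n ∧ Ssum (Step.O1 :: t) = 0 ∧ marks (Step.O1 :: t) = k + 1} = BL n k := by
  rw [BL]
  refine Nat.card_congr (Equiv.subtypeEquivRight fun t => ?_)
  simp only [Ssum_cons, marks_cons, Step.wt, Step.mk1]
  constructor <;> rintro ⟨h1, h2, h3⟩ <;> exact ⟨h1, by omega, by omega⟩

lemma headO1_zero (n : ℕ) :
    Nat.card {t : List Step //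
      t.length = n ∧ Ssum (Step.O1 :: t) = 0 ∧ marks (Step.O1 :: t) = 0} = 0 := by
  refine Nat.card_eq_zero.2 (Or.inl ⟨fun t => ?_⟩)
  have := t.2.2.2
  simp [Step.mk1] at this

lemma headU_succ (n k : ℕ) :
    Nat.card {t : List Step //
      t.length = n ∧ Ssum (Step.U :: t) = 0 ∧ marks (Step.U :: t) = k + 1} = Cpair n k := by
  rw [← Ufiber n k]
  refine Nat.card_congr (Equiv.subtypeEquivRight fun t => ?_)
  simp only [Ssum_cons, marks_cons, Step.wt, Step.mk1]
  constructor <;> rintro ⟨h1, h2, h3⟩ <;> exact ⟨h1, by omega, by omega⟩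

lemma headU_zero (n : ℕ) :
    Nat.card {t : List Step //
      t.length = n ∧ Ssum (Step.U :: t) = 0 ∧ marks (Step.U :: t) = 0} = 0 := by
  refine Nat.card_eq_zero.2 (Or.inl ⟨fun t => ?_⟩)
  have := t.2.2.2
  simp [Step.mk1] at this

lemma headD_succ (n k : ℕ) :
    Nat.card {t : List Step //
      t.length = n ∧ Ssum (Step.D :: t) = 0 ∧ marks (Step.D :: t) = k + 1} = Cpair n k := by
  rw [← Ufiber n k, ← Dfiber n k]
  refine Nat.card_congr (Equiv.subtypeEquivRight fun t => ?_)
  simp only [Ssum_cons, marks_cons, Step.wt, Step.mk1]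
  constructor <;> rintro ⟨h1, h2, h3⟩ <;> exact ⟨h1, by omega, by omega⟩

lemma headD_zero (n : ℕ) :
    Nat.card {t : List Step //
      t.length = n ∧ Ssum (Step.D :: t) = 0 ∧ marks (Step.D :: t) = 0} = 0 := by
  refine Eq.trans ?_ (Dfiber_zero n)
  refine Nat.card_congr (Equiv.subtypeEquivRight fun t => ?_)
  simp only [Ssum_cons, marks_cons, Step.wt, Step.mk1]
  constructor <;> rintro ⟨h1, h2, h3⟩ <;> exact ⟨h1, by omega, by omega⟩

lemma BL_head (n k : ℕ) : BL (n + 1) k =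
    Nat.card {t : List Step // t.length = n ∧ Ssum (Step.U :: t) = 0 ∧ marks (Step.U :: t) = k} +
    Nat.card {t : List Step // t.length = n ∧ Ssum (Step.D :: t) = 0 ∧ marks (Step.D :: t) = k} +
    Nat.card {t : List Step //
      t.length = n ∧ Ssum (Step.O1 :: t) = 0 ∧ marks (Step.O1 :: t) = k} +
    Nat.card {t : List Step //
      t.length = n ∧ Ssum (Step.O2 :: t) = 0 ∧ marks (Step.O2 :: t) = k} := by
  calc BL (n + 1) k
      = Nat.card {p : Step × List Step //
          p.2.length = n ∧ Ssum (p.1 :: p.2) = 0 ∧ marks (p.1 :: p.2) = k} :=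
        (Nat.card_congr (consEquiv (fun l => Ssum l = 0 ∧ marks l = k) n)).symm
    _ = Nat.card (Σ s : Step,
          {t : List Step // t.length = n ∧ Ssum (s :: t) = 0 ∧ marks (s :: t) = k}) :=
        Nat.card_congr (prodSigmaEquiv (fun s t => t.length = n ∧ Ssum (s :: t) = 0 ∧
          marks (s :: t) = k))
    _ = ∑ s : Step,
          Nat.card {t : List Step // t.length = n ∧ Ssum (s :: t) = 0 ∧ marks (s :: t) = k} :=
        card_sigma' _
    _ = _ := step_sum _

lemma BL_rec (n k : ℕ) : BL (n + 1) (k + 1) = BL n (k + 1) + BL n k + 2 * Cpair n k := by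
  rw [BL_head, headU_succ, headD_succ, headO1_succ, headO2]
  omega

lemma BL_rec_zero (n : ℕ) : BL (n + 1) 0 = BL n 0 := by
  rw [BL_head, headU_zero, headD_zero, headO1_zero, headO2]
  omega

lemma BL_zero_zero : BL 0 0 = 1 := by
  rw [BL]
  have : Unique {l : List Step // l.length = 0 ∧ Ssum l = 0 ∧ marks l = 0} := by
    refine ⟨⟨⟨[], by simp⟩⟩, fun l => Subtype.ext ?_⟩
    have := l.2.1
    simpa [List.length_eq_zero_iff] using this
  exact Nat.card_unique

lemma BL_zero_succ (k : ℕ) : BL 0 (k + 1) = 0 := by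
  rw [BL]
  refine Nat.card_eq_zero.2 (Or.inl ⟨fun l => ?_⟩)
  obtain ⟨l, h1, h2, h3⟩ := l
  rw [List.length_eq_zero_iff] at h1
  subst h1
  simp at h3

lemma Cpair_zero (k : ℕ) : Cpair 0 k = 0 := by
  refine Nat.card_eq_zero.2 (Or.inl ⟨fun q => ?_⟩)
  have := q.2.2.2.2.1
  omega

lemma card_nonneg_fiber (a c : ℕ) :
    Nat.card {m : List Step // nonneg m ∧ Ssum m = 0 ∧ m.length = a ∧ marks m = c}
      = CL a c := by
  rw [CL]
  exact Nat.card_congr (Equiv.subtypeEquivRight fun m => by tauto)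

lemma card_bilateral_fiber (b d : ℕ) :
    Nat.card {w : List Step // Ssum w = 0 ∧ w.length = b ∧ marks w = d} = BL b d := by
  rw [BL]
  exact Nat.card_congr (Equiv.subtypeEquivRight fun m => by tauto)

lemma Cpair_succ (n k : ℕ) :
    Cpair (n + 1) k = ∑ p ∈ Finset.HasAntidiagonal.antidiagonal n, ∑ q ∈ Finset.HasAntidiagonal.antidiagonal k,
      CL p.1 q.1 * BL p.2 q.2 := by
  classical
  haveI hfin : ∀ x : ↥(Finset.HasAntidiagonal.antidiagonal n) × ↥(Finset.HasAntidiagonal.antidiagonal k),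
      Finite ({m : List Step // nonneg m ∧ Ssum m = 0 ∧ m.length = x.1.1.1 ∧
          marks m = x.2.1.1} ×
        {w : List Step // Ssum w = 0 ∧ w.length = x.1.1.2 ∧ marks w = x.2.1.2}) := fun x => by
    haveI h1 := finite_of_length (P := fun m : List Step =>
      nonneg m ∧ Ssum m = 0 ∧ m.length = x.1.1.1 ∧ marks m = x.2.1.1)
      (fun l hl => hl.2.2.1)
    haveI h2 := finite_of_length (P := fun w : List Step =>
      Ssum w = 0 ∧ w.length = x.1.1.2 ∧ marks w = x.2.1.2)
      (fun l hl => hl.2.1)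
    exact Finite.instProd
  have hbij : Cpair (n + 1) k = Nat.card
      (Σ x : ↥(Finset.HasAntidiagonal.antidiagonal n) × ↥(Finset.HasAntidiagonal.antidiagonal k),
        ({m : List Step // nonneg m ∧ Ssum m = 0 ∧ m.length = x.1.1.1 ∧
            marks m = x.2.1.1} ×
          {w : List Step // Ssum w = 0 ∧ w.length = x.1.1.2 ∧ marks w = x.2.1.2})) := by
    refine (Nat.card_congr (Equiv.ofBijective
      (fun z => (⟨(z.2.1.1, z.2.2.1), z.2.1.2.1, z.2.1.2.2.1, z.2.2.2.1, by
        have h1 := z.2.1.2.2.2.1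
        have h2 := z.2.2.2.2.1
        have h3 := Finset.HasAntidiagonal.mem_antidiagonal.mp z.1.1.2
        dsimp only at h1 h2 h3 ⊢
        omega, by
        have h1 := z.2.1.2.2.2.2
        have h2 := z.2.2.2.2.2
        have h3 := Finset.HasAntidiagonal.mem_antidiagonal.mp z.1.2.2
        dsimp only at h1 h2 h3 ⊢
        omega⟩ :
        {q : List Step × List Step // nonneg q.1 ∧ Ssum q.1 = 0 ∧ Ssum q.2 = 0 ∧
          q.1.length + q.2.length + 1 = n + 1 ∧ marks q.1 + marks q.2 = k}))
      ⟨?_, ?_⟩)).symm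
    · rintro ⟨⟨⟨⟨a, b⟩, hab⟩, ⟨⟨c, d⟩, hcd⟩⟩, ⟨⟨m, hm⟩, ⟨w, hw⟩⟩⟩
        ⟨⟨⟨⟨a', b'⟩, hab'⟩, ⟨⟨c', d'⟩, hcd'⟩⟩, ⟨⟨m', hm'⟩, ⟨w', hw'⟩⟩⟩ heq
      simp only [Subtype.mk.injEq, Prod.mk.injEq] at heq
      obtain ⟨rfl, rfl⟩ := heq
      dsimp only at hm hm' hw hw'
      obtain ⟨-, -, ha, hc⟩ := hm
      obtain ⟨-, -, ha', hc'⟩ := hm'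
      obtain ⟨-, hb, hd⟩ := hw
      obtain ⟨-, hb', hd'⟩ := hw'
      have : a = a' := by omega
      subst this
      have : b = b' := by omega
      subst this
      have : c = c' := by omega
      subst this
      have : d = d' := by omega
      subst this
      rfl
    · rintro ⟨⟨m, w⟩, h1, h2, h3, h4, h5⟩
      dsimp only at h1 h2 h3 h4 h5
      refine ⟨⟨⟨⟨(m.length, w.length), Finset.HasAntidiagonal.mem_antidiagonal.mpr (by omega)⟩,
        ⟨(marks m, marks w), Finset.HasAntidiagonal.mem_antidiagonal.mpr (by omega)⟩⟩,
        ⟨⟨m, h1, h2, rfl, rfl⟩, ⟨w, h3, rfl, rfl⟩⟩⟩, rfl⟩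
  rw [hbij, card_sigma']
  have key : ∀ x : ↥(Finset.HasAntidiagonal.antidiagonal n) × ↥(Finset.HasAntidiagonal.antidiagonal k),
      Nat.card ({m : List Step // nonneg m ∧ Ssum m = 0 ∧ m.length = x.1.1.1 ∧
          marks m = x.2.1.1} ×
        {w : List Step // Ssum w = 0 ∧ w.length = x.1.1.2 ∧ marks w = x.2.1.2})
      = CL x.1.1.1 x.2.1.1 * BL x.1.1.2 x.2.1.2 := fun x => by
    rw [Nat.card_prod, card_nonneg_fiber, card_bilateral_fiber]
  rw [Finset.sum_congr rfl (fun x _ => key x), Fintype.sum_prod_type]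
  dsimp only
  have h1 : ∀ x : ↥(Finset.HasAntidiagonal.antidiagonal n),
      ∑ y : ↥(Finset.HasAntidiagonal.antidiagonal k),
        CL (x : ℕ × ℕ).1 (y : ℕ × ℕ).1 * BL (x : ℕ × ℕ).2 (y : ℕ × ℕ).2
      = ∑ q ∈ Finset.HasAntidiagonal.antidiagonal k, CL (x : ℕ × ℕ).1 q.1 * BL (x : ℕ × ℕ).2 q.2 := fun x =>
    Finset.sum_coe_sort (Finset.HasAntidiagonal.antidiagonal k)
      (fun q => CL (x : ℕ × ℕ).1 q.1 * BL (x : ℕ × ℕ).2 q.2)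
  rw [Finset.sum_congr rfl (fun x _ => h1 x)]
  exact Finset.sum_coe_sort (Finset.HasAntidiagonal.antidiagonal n)
    (fun p => ∑ q ∈ Finset.HasAntidiagonal.antidiagonal k, CL p.1 q.1 * BL p.2 q.2)

lemma coeff_Mser (d : Fin 2 →₀ ℕ) : MvPowerSeries.coeff d Mser = (CL (d 0) (d 1) : ℚ) := by
  rw [MvPowerSeries.coeff_apply, Mser, bicolored_eq_CL]

lemma coeff_Wser (d : Fin 2 →₀ ℕ) : MvPowerSeries.coeff d Wser = (BL (d 0) (d 1) : ℚ) := by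
  rw [MvPowerSeries.coeff_apply, Wser, bilateral_eq_BL]

lemma fin2_decomp (d : Fin 2 →₀ ℕ) : d = Finsupp.single 0 (d 0) + Finsupp.single 1 (d 1) := by
  ext i; fin_cases i <;> simp [Finsupp.single_apply]

lemma le_iff2 (a b : ℕ) (d : Fin 2 →₀ ℕ) :
    Finsupp.single 0 a + Finsupp.single 1 b ≤ d ↔ a ≤ d 0 ∧ b ≤ d 1 := by
  rw [Finsupp.le_def]
  constructor
  · intro h
    exact ⟨by simpa [Finsupp.single_apply] using h 0, by simpa [Finsupp.single_apply] using h 1⟩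
  · intro h i
    fin_cases i <;> simp [Finsupp.single_apply, h.1, h.2]

lemma coeff_MW (d : Fin 2 →₀ ℕ) : MvPowerSeries.coeff d (Mser * Wser) =
    ∑ p ∈ Finset.HasAntidiagonal.antidiagonal (d 0), ∑ q ∈ Finset.HasAntidiagonal.antidiagonal (d 1),
      (CL p.1 q.1 : ℚ) * (BL p.2 q.2 : ℚ) := by
  classical
  rw [MvPowerSeries.coeff_mul, ← Finset.sum_product']
  refine Finset.sum_nbij' (i := fun p => ((p.1 0, p.2 0), (p.1 1, p.2 1)))
    (j := fun z => (Finsupp.single 0 z.1.1 + Finsupp.single 1 z.2.1,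
      Finsupp.single 0 z.1.2 + Finsupp.single 1 z.2.2)) ?_ ?_ ?_ ?_ ?_
  · intro p hp
    rw [Finset.HasAntidiagonal.mem_antidiagonal] at hp
    simp only [Finset.mem_product, Finset.HasAntidiagonal.mem_antidiagonal]
    constructor
    · rw [← Finsupp.add_apply, hp]
    · rw [← Finsupp.add_apply, hp]
  · intro z hz
    simp only [Finset.mem_product, Finset.HasAntidiagonal.mem_antidiagonal] at hz
    rw [Finset.HasAntidiagonal.mem_antidiagonal]
    have : ∀ i : Fin 2, (((Finsupp.single (0 : Fin 2) z.1.1 + Finsupp.single (1 : Fin 2) z.2.1) +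
        (Finsupp.single (0 : Fin 2) z.1.2 + Finsupp.single (1 : Fin 2) z.2.2) : Fin 2 →₀ ℕ)) i = d i := by
      intro i
      fin_cases i <;>
        simp only [Finsupp.add_apply, Finsupp.single_apply] <;>
        simp <;> omega
    exact Finsupp.ext this
  · intro p _
    have h1 := fin2_decomp p.1
    have h2 := fin2_decomp p.2
    exact Prod.ext h1.symm h2.symm
  · intro z _
    have h00 : (Finsupp.single (0 : Fin 2) z.1.1 + Finsupp.single (1 : Fin 2) z.2.1 : Fin 2 →₀ ℕ) 0
        = z.1.1 := by simp [Finsupp.single_apply]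
    have h01 : (Finsupp.single (0 : Fin 2) z.1.1 + Finsupp.single (1 : Fin 2) z.2.1 : Fin 2 →₀ ℕ) 1
        = z.2.1 := by simp [Finsupp.single_apply]
    have h10 : (Finsupp.single (0 : Fin 2) z.1.2 + Finsupp.single (1 : Fin 2) z.2.2 : Fin 2 →₀ ℕ) 0
        = z.1.2 := by simp [Finsupp.single_apply]
    have h11 : (Finsupp.single (0 : Fin 2) z.1.2 + Finsupp.single (1 : Fin 2) z.2.2 : Fin 2 →₀ ℕ) 1
        = z.2.2 := by simp [Finsupp.single_apply]
    simp only [h00, h01, h10, h11]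
  · intro p _
    rw [coeff_Mser p.1, coeff_Wser p.2]

lemma BL_main (n k : ℕ) : (BL n k : ℚ) =
    (if n = 0 ∧ k = 0 then 1 else 0)
    + (if 1 ≤ n then (BL (n - 1) k : ℚ) else 0)
    + (if 1 ≤ n ∧ 1 ≤ k then (BL (n - 1) (k - 1) : ℚ) else 0)
    + (if 2 ≤ n ∧ 1 ≤ k then
        2 * ∑ p ∈ Finset.HasAntidiagonal.antidiagonal (n - 2), ∑ q ∈ Finset.HasAntidiagonal.antidiagonal (k - 1),
          (CL p.1 q.1 : ℚ) * (BL p.2 q.2 : ℚ)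
      else 0) := by
  rcases n with _ | m
  · rcases k with _ | j
    · simp [BL_zero_zero]
    · simp [BL_zero_succ]
  · rcases k with _ | j
    · rw [BL_rec_zero]
      simp
    · rcases m with _ | p
      · have h := BL_rec 0 j
        rw [Cpair_zero] at h
        simp only [h]
        norm_num
      · have h := BL_rec (p + 1) j
        rw [Cpair_succ] at h
        simp only [h]
        norm_num
        push_cast
        ring

open MvPowerSeries in
/-- First-return functional equation for bilateral Motzkin paths:
`W = 1 + (X + X·U)·W + 2·U·X²·M·W`. -/
theorem Wser_functional_equation :
    Wser = 1 + (X 0 + X 0 * X 1) * Wser + 2 * X 1 * (X 0) ^ 2 * Mser * Wser := by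

  classical
  ext d
  have hd0 : (d = 0) ↔ (d 0 = 0 ∧ d 1 = 0) := by
    constructor
    · rintro rfl; simp
    · intro h
      rw [fin2_decomp d, h.1, h.2]
      simp
  have hX0 : (X 0 : MvPowerSeries (Fin 2) ℚ) = monomial (Finsupp.single 0 1) 1 := rfl
  have hX1 : (X 1 : MvPowerSeries (Fin 2) ℚ) = monomial (Finsupp.single 1 1) 1 := rfl
  have h2m : 2 * X 1 * (X 0 : MvPowerSeries (Fin 2) ℚ) ^ 2
      = monomial (Finsupp.single 0 2 + Finsupp.single 1 1) 2 := by
    rw [pow_two, hX0, hX1,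
      show (2 : MvPowerSeries (Fin 2) ℚ) = monomial 0 2 by
        rw [show (2 : MvPowerSeries (Fin 2) ℚ) = C (σ := Fin 2) (R := ℚ) 2 from
          (map_ofNat (C (σ := Fin 2) (R := ℚ)) 2).symm]
        rfl,
      monomial_mul_monomial, monomial_mul_monomial, monomial_mul_monomial]
    have he : ((0 : Fin 2 →₀ ℕ) + Finsupp.single 1 1 + (Finsupp.single 0 1 + Finsupp.single 0 1))
        = Finsupp.single 0 2 + Finsupp.single 1 1 := by
      ext i; fin_cases i <;> simp [Finsupp.single_apply]
    rw [he]
    norm_num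
  have T1 : coeff d (1 : MvPowerSeries (Fin 2) ℚ)
      = if d 0 = 0 ∧ d 1 = 0 then (1 : ℚ) else 0 := by
    rw [coeff_one]
    exact if_congr hd0 rfl rfl
  have T2 : coeff d (X 0 * Wser) = if 1 ≤ d 0 then (BL (d 0 - 1) (d 1) : ℚ) else 0 := by
    rw [hX0, coeff_monomial_mul]
    refine if_congr Finsupp.single_le_iff ?_ rfl
    rw [one_mul, coeff_Wser]
    have e0 : ((d - Finsupp.single 0 1 : Fin 2 →₀ ℕ)) 0 = d 0 - 1 := by
      rw [Finsupp.tsub_apply]; simp [Finsupp.single_apply]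
    have e1 : ((d - Finsupp.single 0 1 : Fin 2 →₀ ℕ)) 1 = d 1 := by
      rw [Finsupp.tsub_apply]; simp [Finsupp.single_apply]
    rw [e0, e1]
  have T3 : coeff d (X 0 * X 1 * Wser)
      = if 1 ≤ d 0 ∧ 1 ≤ d 1 then (BL (d 0 - 1) (d 1 - 1) : ℚ) else 0 := by
    rw [hX0, hX1, monomial_mul_monomial, coeff_monomial_mul]
    refine if_congr (le_iff2 1 1 d) ?_ rfl
    rw [one_mul, coeff_Wser]
    have e0 : ((d - (Finsupp.single 0 1 + Finsupp.single 1 1) : Fin 2 →₀ ℕ)) 0 = d 0 - 1 := by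
      rw [Finsupp.tsub_apply]; simp [Finsupp.add_apply, Finsupp.single_apply]
    have e1 : ((d - (Finsupp.single 0 1 + Finsupp.single 1 1) : Fin 2 →₀ ℕ)) 1 = d 1 - 1 := by
      rw [Finsupp.tsub_apply]; simp [Finsupp.add_apply, Finsupp.single_apply]
    rw [e0, e1, one_mul]
  have T4 : coeff d (2 * X 1 * (X 0) ^ 2 * Mser * Wser)
      = if 2 ≤ d 0 ∧ 1 ≤ d 1 then
          2 * ∑ p ∈ Finset.HasAntidiagonal.antidiagonal (d 0 - 2), ∑ q ∈ Finset.HasAntidiagonal.antidiagonal (d 1 - 1),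
            (CL p.1 q.1 : ℚ) * (BL p.2 q.2 : ℚ)
        else 0 := by
    rw [show 2 * X 1 * (X 0 : MvPowerSeries (Fin 2) ℚ) ^ 2 * Mser * Wser
        = (2 * X 1 * (X 0) ^ 2) * (Mser * Wser) by ring, h2m, coeff_monomial_mul]
    refine if_congr (le_iff2 2 1 d) ?_ rfl
    rw [coeff_MW]
    have e0 : ((d - (Finsupp.single 0 2 + Finsupp.single 1 1) : Fin 2 →₀ ℕ)) 0 = d 0 - 2 := by
      rw [Finsupp.tsub_apply]; simp [Finsupp.add_apply, Finsupp.single_apply]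
    have e1 : ((d - (Finsupp.single 0 2 + Finsupp.single 1 1) : Fin 2 →₀ ℕ)) 1 = d 1 - 1 := by
      rw [Finsupp.tsub_apply]; simp [Finsupp.add_apply, Finsupp.single_apply]
    rw [e0, e1]
  rw [map_add, map_add, add_mul, map_add, T1, T2, T3, T4, coeff_Wser]
  have hmain := BL_main (d 0) (d 1)
  rw [hmain]
  ring
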